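/- arXiv:1303.3491 — 2 statements merged into one kernel-verified Lean document; each statement's English description precedes it below -/
import Mathlib

section
/- Let n ≥ 1 and σ ∈ B_n. Then the diagonal signed descent monomial c_σ is ordered, i.e., c_σ ∈ 𝒪_n: writing c_σ = x^p y^q with p_i = f_i(σ^{-1}) and q_i = f_{|σ^{-1}(i)|}(σ), one has p_k + q_k even for all k, p_1 ≥ p_2 ≥ ⋯ ≥ p_n, and whenever p_i = p_{i+1}: if p_i is even then q_i ≥ q_{i+1}, and if p_i is odd then q_i ≤ q_{i+1}. -/
open MvPolynomial

/-- The hyperoctahedral group `Bₙ`, realized as the subgroup of permutations of `ℤ`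
that commute with negation and fix every integer of absolute value greater than `n`.
Such a permutation restricts to a bijection `σ` of `{-n,…,-1,1,…,n}` with
`σ(-k) = -σ(k)`, and every such bijection arises from a unique element. -/
def HOct (n : ℕ) : Subgroup (Equiv.Perm ℤ) where
  carrier := {σ | (∀ k : ℤ, σ (-k) = -(σ k)) ∧ ∀ k : ℤ, (n : ℤ) < |k| → σ k = k}
  one_mem' := by
    refine ⟨fun k => rfl, fun k _ => rfl⟩
  mul_mem' := by
    rintro σ τ ⟨hσ1, hσ2⟩ ⟨hτ1, hτ2⟩
    refine ⟨fun k => ?_, fun k hk => ?_⟩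
    · simp [Equiv.Perm.mul_apply, hτ1, hσ1]
    · simp [Equiv.Perm.mul_apply, hτ2 k hk, hσ2 k hk]
  inv_mem' := by
    rintro σ ⟨h1, h2⟩
    refine ⟨fun k => ?_, fun k hk => ?_⟩
    · apply σ.injective
      rw [Equiv.Perm.inv_def, Equiv.apply_symm_apply, h1, Equiv.apply_symm_apply]
    · have h := h2 k hk
      nth_rewrite 1 [← h]
      rw [Equiv.Perm.inv_def, Equiv.symm_apply_apply]

/-- The descent set `Des(σ) = {1 ≤ i ≤ n-1 : σ(i) > σ(i+1)}`. -/
def DesB (n : ℕ) (σ : Equiv.Perm ℤ) : Finset ℕ :=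
  (Finset.Ico 1 n).filter fun i => σ ((i : ℤ) + 1) < σ (i : ℤ)

/-- `d_i(σ) = #{j ∈ Des(σ) : j ≥ i}`. -/
def dB (n : ℕ) (σ : Equiv.Perm ℤ) (i : ℕ) : ℕ :=
  ((DesB n σ).filter fun j => i ≤ j).card

/-- `ε_i(σ)`: `1` if `σ(i) < 0`, `0` otherwise. -/
def epsB (σ : Equiv.Perm ℤ) (i : ℕ) : ℕ := if σ (i : ℤ) < 0 then 1 else 0

/-- `f_i(σ) = 2 d_i(σ) + ε_i(σ)`. -/
def fB (n : ℕ) (σ : Equiv.Perm ℤ) (i : ℕ) : ℕ := 2 * dB n σ i + epsB σ i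

/-- The sign `σ(k)/|σ(k)|` as a rational number. -/
def sgnQ (σ : Equiv.Perm ℤ) (k : ℤ) : ℚ := if σ k < 0 then -1 else 1

/-- For `i : Fin n` (representing the index `i+1 ∈ {1,…,n}`), the element of `Fin n`
representing `|σ(i+1)| ∈ {1,…,n}`. -/
def sIdx {n : ℕ} (σ : Equiv.Perm ℤ) (i : Fin n) : Fin n :=
  ⟨((σ ((i : ℕ) + 1 : ℤ)).natAbs - 1) % n, Nat.mod_lt _ i.pos⟩

/-- The diagonal action of a signed permutation on `ℚ[x₁,…,xₙ,y₁,…,yₙ]`: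
`x_k ↦ (σ(k)/|σ(k)|)·x_{|σ(k)|}` and `y_k ↦ (σ(k)/|σ(k)|)·y_{|σ(k)|}`.
Here `Sum.inl i` is the variable `x_{i+1}` and `Sum.inr i` is `y_{i+1}`. -/
noncomputable def actXY (n : ℕ) (σ : Equiv.Perm ℤ) :
    MvPolynomial (Fin n ⊕ Fin n) ℚ →ₐ[ℚ] MvPolynomial (Fin n ⊕ Fin n) ℚ :=
  aeval (Sum.elim
    (fun i => C (sgnQ σ ((i : ℕ) + 1 : ℤ)) * X (Sum.inl (sIdx σ i)))
    (fun i => C (sgnQ σ ((i : ℕ) + 1 : ℤ)) * X (Sum.inr (sIdx σ i))))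

/-- Action of a signed permutation on the `x`-variables only. -/
noncomputable def actX (n : ℕ) (σ : Equiv.Perm ℤ) :
    MvPolynomial (Fin n ⊕ Fin n) ℚ →ₐ[ℚ] MvPolynomial (Fin n ⊕ Fin n) ℚ :=
  aeval (Sum.elim
    (fun i => C (sgnQ σ ((i : ℕ) + 1 : ℤ)) * X (Sum.inl (sIdx σ i)))
    (fun i => X (Sum.inr i)))

/-- Action of a signed permutation on the `y`-variables only. -/
noncomputable def actY (n : ℕ) (σ : Equiv.Perm ℤ) :
    MvPolynomial (Fin n ⊕ Fin n) ℚ →ₐ[ℚ] MvPolynomial (Fin n ⊕ Fin n) ℚ :=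
  aeval (Sum.elim
    (fun i => X (Sum.inl i))
    (fun i => C (sgnQ σ ((i : ℕ) + 1 : ℤ)) * X (Sum.inr (sIdx σ i))))

/-- The averaging operator `ρ(f) = (1/|Bₙ|) ∑_{σ ∈ Bₙ} σ·f`. -/
noncomputable def rho (n : ℕ) (f : MvPolynomial (Fin n ⊕ Fin n) ℚ) :
    MvPolynomial (Fin n ⊕ Fin n) ℚ :=
  (Nat.card ↥(HOct n) : ℚ)⁻¹ • ∑ᶠ σ : ↥(HOct n), actXY n (σ : Equiv.Perm ℤ) f

/-- The diagonal signed descent monomial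
`c_σ = ∏_{i=1}^n x_i^{f_i(σ⁻¹)} y_i^{f_{|σ⁻¹(i)|}(σ)}`. -/
noncomputable def cMon (n : ℕ) (σ : Equiv.Perm ℤ) : MvPolynomial (Fin n ⊕ Fin n) ℚ :=
  ∏ i : Fin n,
    (X (Sum.inl i) ^ fB n σ⁻¹ ((i : ℕ) + 1) *
      X (Sum.inr i) ^ fB n σ ((σ⁻¹ ((i : ℕ) + 1 : ℤ)).natAbs))

/-- The monomial `x^p y^q`. -/
noncomputable def monXY (n : ℕ) (p q : Fin n → ℕ) : MvPolynomial (Fin n ⊕ Fin n) ℚ :=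
  (∏ i : Fin n, X (Sum.inl i) ^ p i) * ∏ i : Fin n, X (Sum.inr i) ^ q i

/-- The monomial `x^p y^q` is ordered (belongs to `𝒪ₙ`). -/
def OrderedMon (n : ℕ) (p q : Fin n → ℕ) : Prop :=
  (∀ k, Even (p k + q k)) ∧ Antitone p ∧
  (∀ (i : Fin n) (h : (i : ℕ) + 1 < n),
    p i = p ⟨(i : ℕ) + 1, h⟩ → Even (p i) → q ⟨(i : ℕ) + 1, h⟩ ≤ q i) ∧
  (∀ (i : Fin n) (h : (i : ℕ) + 1 < n),
    p i = p ⟨(i : ℕ) + 1, h⟩ → Odd (p i) → q i ≤ q ⟨(i : ℕ) + 1, h⟩)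

/-- `σ` is the signed index permutation of a monomial with `y`-exponent sequence `q`:
(1) `q_{|σ(1)|} ≥ ⋯ ≥ q_{|σ(n)|}`; (2) ties `q_{|σ(i)|} = q_{|σ(j)|}` (`i < j`) force
`σ(i) < σ(i+1) < ⋯ < σ(j)`; (3) `q_{|σ(i)|}` is even iff `σ(i) > 0`. -/
def IsSignedIndexPerm (n : ℕ) (q : Fin n → ℕ) (σ : Equiv.Perm ℤ) : Prop :=
  σ ∈ HOct n ∧
  Antitone (fun i : Fin n => q (sIdx σ i)) ∧
  (∀ i j : Fin n, i < j → q (sIdx σ i) = q (sIdx σ j) →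
    ∀ k l : Fin n, i ≤ k → k < l → l ≤ j →
      σ ((k : ℕ) + 1 : ℤ) < σ ((l : ℕ) + 1 : ℤ)) ∧
  (∀ i : Fin n, Even (q (sIdx σ i)) ↔ 0 < σ ((i : ℕ) + 1 : ℤ))

/-- `𝔰(q) = q` if `q` is even, `-q` if `q` is odd. -/
def sFun (q : ℕ) : ℤ := if Even q then (q : ℤ) else -(q : ℤ)

/-- The decreasing rearrangement `𝔬(q)` of a sequence `q`. -/
def oArr {n : ℕ} (q : Fin n → ℕ) : Fin n → ℕ := fun i => q (Tuple.sort q i.rev)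

/-- Strict lexicographic comparison of sequences. -/
def LexLT {n : ℕ} {α : Type*} [LT α] (a b : Fin n → α) : Prop :=
  ∃ i, (∀ j, j < i → a j = b j) ∧ a i < b i

/-- The monomial `x^{p'} y^{q'}` strictly precedes `x^p y^q` in the total order `≼` on
ordered monomials: either `𝔬(x^{p'}y^{q'}) <_ℓ 𝔬(x^p y^q)` lexicographically, or the
`𝔬`-data agree and `(p', 𝔰(q')) <_ℓ (p, 𝔰(q))` lexicographically. -/
def MonPrec {n : ℕ} (p' q' p q : Fin n → ℕ) : Prop :=
  LexLT (oArr p') (oArr p) ∨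
  (oArr p' = oArr p ∧ LexLT (oArr q') (oArr q)) ∨
  (oArr p' = oArr p ∧ oArr q' = oArr q ∧
    (LexLT p' p ∨ (p' = p ∧ LexLT (fun i => sFun (q' i)) (fun i => sFun (q i)))))

/-- The monomial symmetric polynomial `m_{2ν}(x) = ∑_{[α] ∈ Σₙ/Σₙ(ν)} x^{2α(ν)}`,
i.e. the sum of all distinct monomials `x^{2w}` with `w` a rearrangement of `ν`. -/
noncomputable def mSymX (n : ℕ) (ν : Fin n → ℕ) : MvPolynomial (Fin n ⊕ Fin n) ℚ :=
  ∑ w ∈ Finset.image (fun α : Equiv.Perm (Fin n) => ν ∘ α) Finset.univ,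
    ∏ i : Fin n, X (Sum.inl i) ^ (2 * w i)

/-- The monomial symmetric polynomial `m_{2μ}(y)`. -/
noncomputable def mSymY (n : ℕ) (μ : Fin n → ℕ) : MvPolynomial (Fin n ⊕ Fin n) ℚ :=
  ∑ w ∈ Finset.image (fun α : Equiv.Perm (Fin n) => μ ∘ α) Finset.univ,
    ∏ i : Fin n, X (Sum.inr i) ^ (2 * w i)

/-- The action of a signed permutation on `ℚ[x₁,…,xₙ]`:
`x_k ↦ (σ(k)/|σ(k)|)·x_{|σ(k)|}`. Here the variable `i : Fin n` is `x_{i+1}`. -/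
noncomputable def actB (n : ℕ) (σ : Equiv.Perm ℤ) :
    MvPolynomial (Fin n) ℚ →ₐ[ℚ] MvPolynomial (Fin n) ℚ :=
  aeval fun i => C (sgnQ σ ((i : ℕ) + 1 : ℤ)) * X (sIdx σ i)

/-- The signed descent monomial `b_σ = ∏_{i=1}^n x_i^{f_{|σ⁻¹(i)|}(σ)}`. -/
noncomputable def bMon (n : ℕ) (σ : Equiv.Perm ℤ) : MvPolynomial (Fin n) ℚ :=
  ∏ i : Fin n, X i ^ fB n σ ((σ⁻¹ ((i : ℕ) + 1 : ℤ)).natAbs)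

lemma dB_anti (n : ℕ) (τ : Equiv.Perm ℤ) {i j : ℕ} (hij : i ≤ j) :
    dB n τ j ≤ dB n τ i := by
  apply Finset.card_le_card
  intro x hx
  simp only [Finset.mem_filter] at hx ⊢
  exact ⟨hx.1, le_trans hij hx.2⟩

lemma epsB_le_one (σ : Equiv.Perm ℤ) (i : ℕ) : epsB σ i ≤ 1 := by
  unfold epsB; split <;> omega

lemma fB_mono_of_eps_eq (n : ℕ) (τ : Equiv.Perm ℤ) {i j : ℕ} (hij : i ≤ j)
    (he : epsB τ i = epsB τ j) : fB n τ j ≤ fB n τ i := by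
  have := dB_anti n τ hij
  unfold fB
  omega

lemma dB_succ_lt_of_desc (n : ℕ) (τ : Equiv.Perm ℤ) {j : ℕ} (h1 : 1 ≤ j) (h2 : j < n)
    (hd : τ ((j : ℤ) + 1) < τ (j : ℤ)) : dB n τ (j + 1) < dB n τ j := by
  have hmem : j ∈ (DesB n τ).filter (fun x => j ≤ x) := by
    simp only [DesB, Finset.mem_filter, Finset.mem_Ico]
    exact ⟨⟨⟨h1, h2⟩, hd⟩, le_refl j⟩
  have hsub : insert j ((DesB n τ).filter (fun x => j + 1 ≤ x)) ⊆
      (DesB n τ).filter (fun x => j ≤ x) := by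
    intro x hx
    rcases Finset.mem_insert.mp hx with rfl | hx
    · exact hmem
    · simp only [Finset.mem_filter] at hx ⊢
      exact ⟨hx.1, by omega⟩
  have hcard := Finset.card_le_card hsub
  rw [Finset.card_insert_of_notMem (by simp)] at hcard
  unfold dB
  omega

lemma fB_succ_le (n : ℕ) (τ : Equiv.Perm ℤ) {j : ℕ} (h1 : 1 ≤ j) (h2 : j < n) :
    fB n τ (j + 1) ≤ fB n τ j := by
  by_cases hd : τ ((j : ℤ) + 1) < τ (j : ℤ)
  · have h := dB_succ_lt_of_desc n τ h1 h2 hd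
    have := epsB_le_one τ (j + 1)
    unfold fB
    omega
  · have hle : τ (j : ℤ) ≤ τ ((j : ℤ) + 1) := not_lt.mp hd
    have heps : epsB τ (j + 1) ≤ epsB τ j := by
      unfold epsB
      have hc : ((j + 1 : ℕ) : ℤ) = (j : ℤ) + 1 := by push_cast; ring
      rw [hc]
      split_ifs <;> omega
    have := dB_anti n τ (show j ≤ j + 1 by omega)
    unfold fB
    omega

lemma fB_le (n : ℕ) (τ : Equiv.Perm ℤ) {i j : ℕ} (h1 : 1 ≤ i) (hij : i ≤ j)
    (hjn : j ≤ n) : fB n τ j ≤ fB n τ i := by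
  induction j, hij using Nat.le_induction with
  | base => exact le_refl _
  | succ j hj ih =>
    exact le_trans (fB_succ_le n τ (le_trans h1 hj) (by omega)) (ih (by omega))

/-- For every `σ ∈ Bₙ`, the diagonal signed descent monomial `c_σ`, with exponents
`p_i = f_i(σ⁻¹)` and `q_i = f_{|σ⁻¹(i)|}(σ)`, is an ordered monomial (lies in `𝒪ₙ`). -/
theorem cMon_ordered (n : ℕ) (hn : 1 ≤ n) (σ : Equiv.Perm ℤ) (hσ : σ ∈ HOct n) :
    OrderedMon n (fun i : Fin n => fB n σ⁻¹ ((i : ℕ) + 1))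
      (fun i : Fin n => fB n σ ((σ⁻¹ ((i : ℕ) + 1 : ℤ)).natAbs)) := by
  obtain ⟨hneg, hfix⟩ := hσ
  have hzero : σ 0 = 0 := by
    have h0 := hneg 0
    rw [neg_zero] at h0
    omega
  have hne : ∀ k : ℤ, 0 < k → σ⁻¹ k ≠ 0 := by
    intro k hk h
    have : σ (σ⁻¹ k) = σ 0 := by rw [h]
    rw [Equiv.Perm.inv_def, Equiv.apply_symm_apply, hzero] at this
    omega
  have happ : ∀ k : ℤ, σ (σ⁻¹ k) = k := fun k => by rw [Equiv.Perm.inv_def, Equiv.apply_symm_apply]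
  refine ⟨?_, ?_, ?_, ?_⟩
  · -- parity
    intro k
    show Even (fB n σ⁻¹ ((k : ℕ) + 1) + fB n σ ((σ⁻¹ (((k : ℕ) : ℤ) + 1)).natAbs))
    set m : ℤ := σ⁻¹ (((k : ℕ) : ℤ) + 1) with hm
    have hm0 : m ≠ 0 := hne _ (by positivity)
    have hσm : σ m = ((k : ℕ) : ℤ) + 1 := happ _
    have heq : epsB σ⁻¹ ((k : ℕ) + 1) = epsB σ m.natAbs := by
      unfold epsB
      have hc : (((k : ℕ) + 1 : ℕ) : ℤ) = ((k : ℕ) : ℤ) + 1 := by push_cast; ring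
      rw [hc, ← hm]
      rcases lt_or_gt_of_ne hm0 with hlt | hgt
      · have hca : ((m.natAbs : ℕ) : ℤ) = -m := by omega
        rw [hca, hneg, hσm, if_pos hlt, if_pos (by omega)]
      · have hca : ((m.natAbs : ℕ) : ℤ) = m := by omega
        rw [hca, hσm, if_neg (by omega), if_neg (by omega)]
    unfold fB
    rw [heq]
    exact ⟨dB n σ⁻¹ ((k : ℕ) + 1) + dB n σ m.natAbs + epsB σ m.natAbs, by ring⟩
  · -- antitone
    intro i j hij
    exact fB_le n σ⁻¹ (by omega) (by have : (i : ℕ) ≤ (j : ℕ) := hij; omega) (by omega)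
  · -- even case
    intro i h hp hev
    have hp' : fB n σ⁻¹ ((i : ℕ) + 1) = fB n σ⁻¹ ((i : ℕ) + 1 + 1) := hp
    have hev' : Even (fB n σ⁻¹ ((i : ℕ) + 1)) := hev
    clear hp hev
    show fB n σ ((σ⁻¹ ((((i : ℕ) + 1 : ℕ) : ℤ) + 1)).natAbs) ≤
      fB n σ ((σ⁻¹ (((i : ℕ) : ℤ) + 1)).natAbs)
    set a : ℤ := σ⁻¹ (((i : ℕ) : ℤ) + 1) with ha
    set b : ℤ := σ⁻¹ ((((i : ℕ) + 1 : ℕ) : ℤ) + 1) with hb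
    have hcb : (((i : ℕ) + 1 : ℕ) : ℤ) + 1 = (((i : ℕ) : ℤ) + 1) + 1 := by push_cast; ring
    have ha0 : a ≠ 0 := hne _ (by positivity)
    have hb0 : b ≠ 0 := hne _ (by rw [hcb]; positivity)
    -- extract eps and d equalities from hp
    have hd : dB n σ⁻¹ ((i : ℕ) + 1 + 1) ≤ dB n σ⁻¹ ((i : ℕ) + 1) :=
      dB_anti n σ⁻¹ (by omega)
    have he1 := epsB_le_one σ⁻¹ ((i : ℕ) + 1)
    have he2 := epsB_le_one σ⁻¹ ((i : ℕ) + 1 + 1)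
    unfold fB at hp'
    have heps : epsB σ⁻¹ ((i : ℕ) + 1) = epsB σ⁻¹ ((i : ℕ) + 1 + 1) := by omega
    have hdd : dB n σ⁻¹ ((i : ℕ) + 1) = dB n σ⁻¹ ((i : ℕ) + 1 + 1) := by omega
    have hnd : ¬ (σ⁻¹ ((((i : ℕ) + 1 : ℕ) : ℤ) + 1) < σ⁻¹ (((i : ℕ) + 1 : ℕ) : ℤ)) := by
      intro hdesc
      have := dB_succ_lt_of_desc n σ⁻¹ (j := (i : ℕ) + 1) (by omega) h hdesc
      omega
    have hab : a ≤ b := by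
      rw [ha, hb]
      have hc2 : (((i : ℕ) + 1 : ℕ) : ℤ) = ((i : ℕ) : ℤ) + 1 := by push_cast; ring
      rw [hc2] at hnd
      exact not_lt.mp hnd
    -- evenness forces eps = 0
    have hev2 : Even (epsB σ⁻¹ ((i : ℕ) + 1)) := by
      unfold fB at hev'
      rcases hev' with ⟨r, hr⟩
      exact ⟨r - dB n σ⁻¹ ((i : ℕ) + 1), by omega⟩
    have he0 : epsB σ⁻¹ ((i : ℕ) + 1) = 0 := by rcases hev2 with ⟨r2, hr2⟩; omega
    have hanneg : ¬ a < 0 := by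
      intro hlt
      have : epsB σ⁻¹ ((i : ℕ) + 1) = 1 := by
        unfold epsB
        rw [if_pos]
        have hc : (((i : ℕ) + 1 : ℕ) : ℤ) = ((i : ℕ) : ℤ) + 1 := by push_cast; ring
        rw [hc, ← ha]; exact hlt
      omega
    have hapos : 0 < a := by omega
    have hbpos : 0 < b := by omega
    have hσa : σ a = ((i : ℕ) : ℤ) + 1 := happ _
    have hσb : σ b = (((i : ℕ) + 1 : ℕ) : ℤ) + 1 := happ _
    apply fB_mono_of_eps_eq n σ (by omega)
    unfold epsB
    have hca : ((a.natAbs : ℕ) : ℤ) = a := by omega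
    have hcb' : ((b.natAbs : ℕ) : ℤ) = b := by omega
    rw [hca, hcb', hσa, hσb, if_neg (by omega), if_neg (by push_cast; omega)]
  · -- odd case
    intro i h hp hodd
    have hp' : fB n σ⁻¹ ((i : ℕ) + 1) = fB n σ⁻¹ ((i : ℕ) + 1 + 1) := hp
    have hodd' : Odd (fB n σ⁻¹ ((i : ℕ) + 1)) := hodd
    clear hp hodd
    show fB n σ ((σ⁻¹ (((i : ℕ) : ℤ) + 1)).natAbs) ≤
      fB n σ ((σ⁻¹ ((((i : ℕ) + 1 : ℕ) : ℤ) + 1)).natAbs)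
    set a : ℤ := σ⁻¹ (((i : ℕ) : ℤ) + 1) with ha
    set b : ℤ := σ⁻¹ ((((i : ℕ) + 1 : ℕ) : ℤ) + 1) with hb
    have hcb : (((i : ℕ) + 1 : ℕ) : ℤ) + 1 = (((i : ℕ) : ℤ) + 1) + 1 := by push_cast; ring
    have ha0 : a ≠ 0 := hne _ (by positivity)
    have hb0 : b ≠ 0 := hne _ (by rw [hcb]; positivity)
    have hd : dB n σ⁻¹ ((i : ℕ) + 1 + 1) ≤ dB n σ⁻¹ ((i : ℕ) + 1) :=
      dB_anti n σ⁻¹ (by omega)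
    have he1 := epsB_le_one σ⁻¹ ((i : ℕ) + 1)
    have he2 := epsB_le_one σ⁻¹ ((i : ℕ) + 1 + 1)
    unfold fB at hp'
    have heps : epsB σ⁻¹ ((i : ℕ) + 1) = epsB σ⁻¹ ((i : ℕ) + 1 + 1) := by omega
    have hdd : dB n σ⁻¹ ((i : ℕ) + 1) = dB n σ⁻¹ ((i : ℕ) + 1 + 1) := by omega
    have hnd : ¬ (σ⁻¹ ((((i : ℕ) + 1 : ℕ) : ℤ) + 1) < σ⁻¹ (((i : ℕ) + 1 : ℕ) : ℤ)) := by
      intro hdesc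
      have := dB_succ_lt_of_desc n σ⁻¹ (j := (i : ℕ) + 1) (by omega) h hdesc
      omega
    have hab : a ≤ b := by
      rw [ha, hb]
      have hc2 : (((i : ℕ) + 1 : ℕ) : ℤ) = ((i : ℕ) : ℤ) + 1 := by push_cast; ring
      rw [hc2] at hnd
      exact not_lt.mp hnd
    -- oddness forces eps = 1
    have hodd2 : Odd (epsB σ⁻¹ ((i : ℕ) + 1)) := by
      unfold fB at hodd'
      rcases hodd' with ⟨r, hr⟩
      exact ⟨r - dB n σ⁻¹ ((i : ℕ) + 1), by omega⟩
    have he0 : epsB σ⁻¹ ((i : ℕ) + 1) = 1 := by rcases hodd2 with ⟨r2, hr2⟩; omega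
    have haneg : a < 0 := by
      by_contra hge
      have : epsB σ⁻¹ ((i : ℕ) + 1) = 0 := by
        unfold epsB
        rw [if_neg]
        have hc : (((i : ℕ) + 1 : ℕ) : ℤ) = ((i : ℕ) : ℤ) + 1 := by push_cast; ring
        rw [hc, ← ha]; exact hge
      omega
    have hbneg : b < 0 := by
      have : epsB σ⁻¹ ((i : ℕ) + 1 + 1) = 1 := by omega
      by_contra hge
      have h0 : epsB σ⁻¹ ((i : ℕ) + 1 + 1) = 0 := by
        unfold epsB
        rw [if_neg]
        have hc : (((i : ℕ) + 1 + 1 : ℕ) : ℤ) = (((i : ℕ) + 1 : ℕ) : ℤ) + 1 := by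
          push_cast; ring
        rw [hc, ← hb]; exact hge
      omega
    have hσa : σ a = ((i : ℕ) : ℤ) + 1 := happ _
    have hσb : σ b = (((i : ℕ) + 1 : ℕ) : ℤ) + 1 := happ _
    apply fB_mono_of_eps_eq n σ (by omega)
    unfold epsB
    have hca : ((a.natAbs : ℕ) : ℤ) = -a := by omega
    have hcb' : ((b.natAbs : ℕ) : ℤ) = -b := by omega
    rw [hcb', hca, hneg, hneg, hσa, hσb, if_pos (by omega), if_pos (by push_cast; omega)]
end

section
/- Let n ≥ 1, let p = (p_1,…,p_n) and q = (q_1,…,q_n) be sequences of non-negative integers with p_k + q_k even for all 1 ≤ k ≤ n, and let m(x,y) = x^p y^q. Then among the monomials appearing with nonzero coefficient in the polynomial ρ(m(x,y)) there is exactly one ordered monomial n(x,y) ∈ 𝒪_n, and moreover ρ(m(x,y)) = ρ(n(x,y)). -/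
open MvPolynomial

section Aux

variable {n : ℕ}

theorem hoct_zero {σ : Equiv.Perm ℤ} (hσ : σ ∈ HOct n) : σ 0 = 0 := by
  have h := hσ.1 0
  simp only [neg_zero] at h
  omega

theorem hoct_ne_zero {σ : Equiv.Perm ℤ} (hσ : σ ∈ HOct n) {k : ℤ} (hk : k ≠ 0) :
    σ k ≠ 0 := fun hc => hk (σ.injective (hc.trans (hoct_zero hσ).symm))

theorem hoct_natAbs_le {σ : Equiv.Perm ℤ} (hσ : σ ∈ HOct n) {k : ℤ}
    (hk : k.natAbs ≤ n) : (σ k).natAbs ≤ n := by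
  by_contra hc
  push_neg at hc
  have h2 := hσ.2 (σ k) (by rw [Int.abs_eq_natAbs]; exact_mod_cast hc)
  have h3 := σ.injective h2
  omega

theorem sIdx_spec {σ : Equiv.Perm ℤ} (hσ : σ ∈ HOct n) (i : Fin n) :
    ((sIdx σ i : Fin n) : ℕ) + 1 = (σ (((i : ℕ) : ℤ) + 1)).natAbs := by
  have hk : ((((i : ℕ) : ℤ)) + 1).natAbs ≤ n := by
    have := i.2; omega
  have h1 := hoct_natAbs_le hσ hk
  have h0 : σ (((i : ℕ) : ℤ) + 1) ≠ 0 := hoct_ne_zero hσ (by omega)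
  have h0' : (σ (((i : ℕ) : ℤ) + 1)).natAbs ≠ 0 := by omega
  show ((σ (((i : ℕ) : ℤ) + 1)).natAbs - 1) % n + 1 = _
  rw [Nat.mod_eq_of_lt (by omega)]
  omega

theorem apply_natAbs {σ : Equiv.Perm ℤ} (hσ : σ ∈ HOct n) (m : ℤ) :
    (σ ((m.natAbs : ℤ))).natAbs = (σ m).natAbs := by
  rcases le_or_gt 0 m with h | h
  · rw [Int.natAbs_of_nonneg h]
  · have h2 : ((m.natAbs : ℤ)) = -m := by omega
    rw [h2, hσ.1, Int.natAbs_neg]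

theorem sIdx_comp {σ τ : Equiv.Perm ℤ} (hσ : σ ∈ HOct n) (hτ : τ ∈ HOct n)
    (i : Fin n) : sIdx σ (sIdx τ i) = sIdx (σ * τ) i := by
  have h1 := sIdx_spec hσ (sIdx τ i)
  have h2 := sIdx_spec hτ i
  have h3 := sIdx_spec (mul_mem hσ hτ) i
  have e : (((sIdx τ i : Fin n) : ℕ) : ℤ) + 1 = ((τ (((i : ℕ) : ℤ) + 1)).natAbs : ℤ) := by
    exact_mod_cast congrArg (fun m : ℕ => (m : ℤ)) h2
  rw [e, apply_natAbs hσ] at h1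
  rw [Equiv.Perm.mul_apply] at h3
  exact Fin.ext (by omega)

theorem sIdx_one (i : Fin n) : sIdx (1 : Equiv.Perm ℤ) i = i := by
  apply Fin.ext
  show ((((1 : Equiv.Perm ℤ) (((i : ℕ) : ℤ) + 1)).natAbs - 1) % n) = (i : ℕ)
  have : ((1 : Equiv.Perm ℤ) (((i : ℕ) : ℤ) + 1)) = ((i : ℕ) : ℤ) + 1 := rfl
  rw [this]
  have h : ((((i : ℕ) : ℤ)) + 1).natAbs = (i : ℕ) + 1 := by omega
  rw [h]
  simp [Nat.mod_eq_of_lt i.2]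

/-- The underlying (unsigned) permutation of `Fin n` induced by `σ ∈ HOct n`. -/
def eIdx (σ : Equiv.Perm ℤ) (hσ : σ ∈ HOct n) : Equiv.Perm (Fin n) where
  toFun := sIdx σ
  invFun := sIdx σ⁻¹
  left_inv := fun i => by
    rw [sIdx_comp (inv_mem hσ) hσ, inv_mul_cancel, sIdx_one]
  right_inv := fun i => by
    rw [sIdx_comp hσ (inv_mem hσ), mul_inv_cancel, sIdx_one]

@[simp] theorem eIdx_apply (σ : Equiv.Perm ℤ) (hσ : σ ∈ HOct n) (i : Fin n) :
    eIdx σ hσ i = sIdx σ i := rfl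

instance hoct_finite (n : ℕ) : Finite ↥(HOct n) := by
  have hinj : Function.Injective (fun σ : ↥(HOct n) =>
      (fun x : Set.Icc (-(n : ℤ)) (n : ℤ) =>
        (⟨σ.1 x.1, by
          have hx := x.2
          simp only [Set.mem_Icc] at hx ⊢
          have h1 : (x.1).natAbs ≤ n := by omega
          have h2 := hoct_natAbs_le σ.2 h1
          omega⟩ : Set.Icc (-(n : ℤ)) (n : ℤ)))) := by
    intro σ τ hst
    ext k
    rcases le_or_gt k.natAbs n with hk | hk
    · have hmem : k ∈ Set.Icc (-(n : ℤ)) (n : ℤ) := by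
        simp only [Set.mem_Icc]; omega
      have := congrFun hst ⟨k, hmem⟩
      exact congrArg Subtype.val this
    · have h1 := σ.2.2 k (by rw [Int.abs_eq_natAbs]; exact_mod_cast hk)
      have h2 := τ.2.2 k (by rw [Int.abs_eq_natAbs]; exact_mod_cast hk)
      rw [h1, h2]
  exact Finite.of_injective _ hinj

noncomputable instance hoct_fintype (n : ℕ) : Fintype ↥(HOct n) := Fintype.ofFinite _

theorem hoct_card_pos (n : ℕ) : 0 < Nat.card ↥(HOct n) := Nat.card_pos

theorem rho_eq_sum (n : ℕ) (f : MvPolynomial (Fin n ⊕ Fin n) ℚ) :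
    rho n f = (Nat.card ↥(HOct n) : ℚ)⁻¹ • ∑ σ : ↥(HOct n), actXY n σ.1 f := by
  rw [rho, finsum_eq_sum_of_fintype]

/-- `x^p y^q` as a single monomial. -/
noncomputable def expF {n : ℕ} (p q : Fin n → ℕ) : (Fin n ⊕ Fin n) →₀ ℕ :=
  Finsupp.equivFunOnFinite.symm (Sum.elim p q)

@[simp] theorem expF_inl {p q : Fin n → ℕ} (i : Fin n) : expF p q (Sum.inl i) = p i := rfl

@[simp] theorem expF_inr {p q : Fin n → ℕ} (i : Fin n) : expF p q (Sum.inr i) = q i := rfl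

theorem monXY_eq (p q : Fin n → ℕ) :
    monXY n p q = MvPolynomial.monomial (expF p q) 1 := by
  rw [monXY, MvPolynomial.monomial_eq, MvPolynomial.C_1, one_mul,
    Finsupp.prod_fintype _ _ (fun i => pow_zero _), Fintype.prod_sum_type]
  simp

theorem expF_eq_iff {p q p' q' : Fin n → ℕ} :
    expF p q = expF p' q' ↔ p = p' ∧ q = q' := by
  constructor
  · intro h
    constructor <;> funext i
    · exact (congrArg (fun f => DFunLike.coe f (Sum.inl i)) h)
    · exact (congrArg (fun f => DFunLike.coe f (Sum.inr i)) h)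
  · rintro ⟨rfl, rfl⟩; rfl

theorem sgnQ_sq {σ : Equiv.Perm ℤ} (k : ℤ) : sgnQ σ k ^ 2 = 1 := by
  unfold sgnQ; split <;> norm_num

theorem sgnQ_pow_even {σ : Equiv.Perm ℤ} (k : ℤ) {m : ℕ} (hm : Even m) :
    sgnQ σ k ^ m = 1 := by
  rcases hm with ⟨t, ht⟩
  rw [ht, ← two_mul, pow_mul, sgnQ_sq, one_pow]

theorem actXY_monXY {σ : Equiv.Perm ℤ} (hσ : σ ∈ HOct n) (p q : Fin n → ℕ)
    (h : ∀ k, Even (p k + q k)) :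
    actXY n σ (monXY n p q) =
      monXY n (p ∘ (eIdx σ hσ).symm) (q ∘ (eIdx σ hσ).symm) := by
  unfold monXY actXY
  rw [map_mul, map_prod, map_prod]
  simp only [map_pow, MvPolynomial.aeval_X, Sum.elim_inl, Sum.elim_inr, mul_pow]
  rw [Finset.prod_mul_distrib, Finset.prod_mul_distrib, mul_mul_mul_comm]
  have hsign : ((∏ i : Fin n, (MvPolynomial.C (sgnQ σ (((i : ℕ) : ℤ) + 1)) :
        MvPolynomial (Fin n ⊕ Fin n) ℚ) ^ p i) *
      ∏ i : Fin n, (MvPolynomial.C (sgnQ σ (((i : ℕ) : ℤ) + 1)) :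
        MvPolynomial (Fin n ⊕ Fin n) ℚ) ^ q i) = 1 := by
    rw [← Finset.prod_mul_distrib]
    apply Finset.prod_eq_one
    intro i _
    rw [← pow_add, ← map_pow, sgnQ_pow_even _ (h i), MvPolynomial.C_1]
  rw [hsign, one_mul]
  congr 1
  · rw [← Equiv.prod_comp (eIdx σ hσ)
      (fun j => (MvPolynomial.X (Sum.inl j) : MvPolynomial (Fin n ⊕ Fin n) ℚ) ^
        (p ∘ (eIdx σ hσ).symm) j)]
    apply Finset.prod_congr rfl
    intro i _
    simp only [Function.comp_apply]
    rw [show sIdx σ i = eIdx σ hσ i from rfl, Equiv.symm_apply_apply]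
  · rw [← Equiv.prod_comp (eIdx σ hσ)
      (fun j => (MvPolynomial.X (Sum.inr j) : MvPolynomial (Fin n ⊕ Fin n) ℚ) ^
        (q ∘ (eIdx σ hσ).symm) j)]
    apply Finset.prod_congr rfl
    intro i _
    simp only [Function.comp_apply]
    rw [show sIdx σ i = eIdx σ hσ i from rfl, Equiv.symm_apply_apply]

theorem sgnQ_comp {σ τ : Equiv.Perm ℤ} (hσ : σ ∈ HOct n) (hτ : τ ∈ HOct n)
    (i : Fin n) :
    sgnQ τ (((i : ℕ) : ℤ) + 1) * sgnQ σ ((((sIdx τ i : Fin n) : ℕ) : ℤ) + 1) =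
      sgnQ (σ * τ) (((i : ℕ) : ℤ) + 1) := by
  have h2 := sIdx_spec hτ i
  have e : ((((sIdx τ i : Fin n) : ℕ) : ℤ) + 1) = ((τ (((i : ℕ) : ℤ) + 1)).natAbs : ℤ) := by
    exact_mod_cast congrArg (fun m : ℕ => (m : ℤ)) h2
  rw [e]
  set t := τ (((i : ℕ) : ℤ) + 1) with ht
  have ht0 : t ≠ 0 := hoct_ne_zero hτ (by omega)
  have hmul : (σ * τ) (((i : ℕ) : ℤ) + 1) = σ t := rfl
  rcases lt_or_gt_of_ne ht0 with htneg | htpos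
  · have hcast : ((t.natAbs : ℤ)) = -t := by omega
    rw [hcast]
    have hneg : σ (-t) = -σ t := hσ.1 t
    have hst0 : σ t ≠ 0 := hoct_ne_zero hσ ht0
    unfold sgnQ
    rw [hneg, hmul]
    rcases lt_or_gt_of_ne hst0 with hs | hs
    · rw [if_pos htneg, if_neg (by omega), if_pos hs]; norm_num
    · rw [if_pos htneg, if_pos (by omega), if_neg (by omega)]; norm_num
  · have hcast : ((t.natAbs : ℤ)) = t := by omega
    rw [hcast]
    unfold sgnQ
    rw [hmul, if_neg (by omega)]
    ring

theorem actXY_actXY {σ τ : Equiv.Perm ℤ} (hσ : σ ∈ HOct n) (hτ : τ ∈ HOct n)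
    (f : MvPolynomial (Fin n ⊕ Fin n) ℚ) :
    actXY n σ (actXY n τ f) = actXY n (σ * τ) f := by
  have hcomp : (actXY n σ).comp (actXY n τ) = actXY n (σ * τ) := by
    apply MvPolynomial.algHom_ext
    intro i
    cases i with
    | inl i =>
      simp only [AlgHom.comp_apply, actXY, MvPolynomial.aeval_X, Sum.elim_inl,
        map_mul, MvPolynomial.aeval_C, MvPolynomial.algebraMap_eq]
      rw [← mul_assoc, ← MvPolynomial.C_mul, sgnQ_comp hσ hτ, sIdx_comp hσ hτ]
    | inr i =>
      simp only [AlgHom.comp_apply, actXY, MvPolynomial.aeval_X, Sum.elim_inr,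
        map_mul, MvPolynomial.aeval_C, MvPolynomial.algebraMap_eq]
      rw [← mul_assoc, ← MvPolynomial.C_mul, sgnQ_comp hσ hτ, sIdx_comp hσ hτ]
  exact congrArg (fun g : MvPolynomial (Fin n ⊕ Fin n) ℚ →ₐ[ℚ]
    MvPolynomial (Fin n ⊕ Fin n) ℚ => g f) hcomp

theorem rho_actXY {σ : Equiv.Perm ℤ} (hσ : σ ∈ HOct n)
    (f : MvPolynomial (Fin n ⊕ Fin n) ℚ) :
    rho n (actXY n σ f) = rho n f := by
  rw [rho_eq_sum, rho_eq_sum]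
  congr 1
  exact Fintype.sum_equiv (Equiv.mulRight (⟨σ, hσ⟩ : ↥(HOct n)))
    (fun τ => actXY n τ.1 (actXY n σ f)) (fun τ => actXY n τ.1 f)
    (fun τ => actXY_actXY τ.2 hσ f)

/-- Helper for building signed permutations from unsigned ones. -/
def gN (n : ℕ) (π : Equiv.Perm (Fin n)) (m : ℕ) : ℕ :=
  if h : 1 ≤ m ∧ m ≤ n then ((π ⟨m - 1, by omega⟩ : Fin n) : ℕ) + 1 else m

theorem gN_gN (π : Equiv.Perm (Fin n)) (m : ℕ) : gN n π⁻¹ (gN n π m) = m := by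
  unfold gN
  by_cases h : 1 ≤ m ∧ m ≤ n
  · rw [dif_pos h]
    have hlt : ((π ⟨m - 1, by omega⟩ : Fin n) : ℕ) < n := Fin.is_lt _
    rw [dif_pos ⟨by omega, by omega⟩]
    have he : (⟨((π ⟨m - 1, by omega⟩ : Fin n) : ℕ) + 1 - 1, by omega⟩ : Fin n) =
        π ⟨m - 1, by omega⟩ := Fin.ext (by simp)
    rw [he, Equiv.Perm.inv_def, Equiv.symm_apply_apply]
    show m - 1 + 1 = m
    omega
  · rw [dif_neg h, dif_neg h]

theorem gN_pos (π : Equiv.Perm (Fin n)) {m : ℕ} (hm : 1 ≤ m) : 1 ≤ gN n π m := by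
  unfold gN; split <;> omega

theorem gN_zero (π : Equiv.Perm (Fin n)) : gN n π 0 = 0 := by
  unfold gN; rw [dif_neg (by omega)]

/-- Helper function of a signed permutation induced by `π`. -/
def fZ (n : ℕ) (π : Equiv.Perm (Fin n)) (k : ℤ) : ℤ :=
  if k < 0 then -(gN n π k.natAbs : ℤ) else (gN n π k.natAbs : ℤ)

theorem fZ_fZ (π : Equiv.Perm (Fin n)) (k : ℤ) : fZ n π⁻¹ (fZ n π k) = k := by
  unfold fZ
  rcases lt_trichotomy k 0 with hk | rfl | hk
  · rw [if_pos hk]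
    have h1 : 1 ≤ gN n π k.natAbs := gN_pos π (by omega)
    rw [if_pos (by omega : -(gN n π k.natAbs : ℤ) < 0)]
    have h2 : (-(gN n π k.natAbs : ℤ)).natAbs = gN n π k.natAbs := by omega
    rw [h2, gN_gN]
    omega
  · simp [gN_zero]
  · rw [if_neg (show ¬ k < 0 by omega)]
    have h1 : 1 ≤ gN n π k.natAbs := gN_pos π (by omega)
    rw [if_neg (show ¬((gN n π k.natAbs : ℤ) < 0) by omega)]
    have h2 : (((gN n π k.natAbs : ℤ))).natAbs = gN n π k.natAbs := by omega
    rw [h2, gN_gN]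
    omega

/-- The all-positive signed permutation induced by `π : Perm (Fin n)`. -/
def permZ (n : ℕ) (π : Equiv.Perm (Fin n)) : Equiv.Perm ℤ where
  toFun := fZ n π
  invFun := fZ n π⁻¹
  left_inv := fun k => fZ_fZ π k
  right_inv := fun k => by
    have h := fZ_fZ π⁻¹ k
    rwa [inv_inv] at h

theorem permZ_mem (π : Equiv.Perm (Fin n)) : permZ n π ∈ HOct n := by
  constructor
  · intro k
    show fZ n π (-k) = -(fZ n π k)
    unfold fZ
    rcases lt_trichotomy k 0 with hk | rfl | hk
    · rw [if_neg (show ¬ -k < 0 by omega), if_pos hk, Int.natAbs_neg]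
      ring
    · simp [gN_zero]
    · rw [if_pos (show -k < 0 by omega), if_neg (show ¬ k < 0 by omega), Int.natAbs_neg]
  · intro k hk
    show fZ n π k = k
    have h1 : n < k.natAbs := by
      rw [Int.abs_eq_natAbs] at hk; exact_mod_cast hk
    have hg : gN n π k.natAbs = k.natAbs := by
      unfold gN; rw [dif_neg (by omega)]
    unfold fZ
    rw [hg]
    split <;> omega

theorem permZ_apply_pos (π : Equiv.Perm (Fin n)) (i : Fin n) :
    permZ n π (((i : ℕ) : ℤ) + 1) = (((π i : Fin n) : ℕ) : ℤ) + 1 := by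
  have hrfl : permZ n π (((i : ℕ) : ℤ) + 1) = fZ n π (((i : ℕ) : ℤ) + 1) := rfl
  rw [hrfl]
  unfold fZ
  rw [if_neg (show ¬ (((i : ℕ) : ℤ) + 1) < 0 by omega)]
  have hna : ((((i : ℕ) : ℤ)) + 1).natAbs = (i : ℕ) + 1 := by omega
  rw [hna]
  unfold gN
  rw [dif_pos ⟨by omega, by have := i.2; omega⟩]
  have he : (⟨(i : ℕ) + 1 - 1, by have := i.2; omega⟩ : Fin n) = i := Fin.ext (by simp)
  rw [he]
  push_cast
  ring

theorem sIdx_permZ (π : Equiv.Perm (Fin n)) (i : Fin n) :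
    sIdx (permZ n π) i = π i := by
  have h := sIdx_spec (permZ_mem π) i
  rw [permZ_apply_pos] at h
  apply Fin.ext
  have h2 : ((((π i : Fin n) : ℕ) : ℤ) + 1).natAbs = ((π i : Fin n) : ℕ) + 1 := by omega
  rw [h2] at h
  omega

theorem eIdx_permZ (π : Equiv.Perm (Fin n)) :
    eIdx (permZ n π) (permZ_mem π) = π := Equiv.ext fun i => sIdx_permZ π i

theorem coeff_rho (p q : Fin n → ℕ) (h : ∀ k, Even (p k + q k))
    (d : (Fin n ⊕ Fin n) →₀ ℕ) :
    MvPolynomial.coeff d (rho n (monXY n p q)) =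
      (Nat.card ↥(HOct n) : ℚ)⁻¹ *
        ∑ σ : ↥(HOct n),
          (if expF (p ∘ (eIdx σ.1 σ.2).symm) (q ∘ (eIdx σ.1 σ.2).symm) = d
            then (1 : ℚ) else 0) := by
  rw [rho_eq_sum, MvPolynomial.coeff_smul, smul_eq_mul]
  congr 1
  rw [MvPolynomial.coeff_sum]
  apply Finset.sum_congr rfl
  intro σ _
  rw [actXY_monXY σ.2 p q h, monXY_eq, MvPolynomial.coeff_monomial]

theorem mem_support_rho_iff (p q : Fin n → ℕ) (h : ∀ k, Even (p k + q k))
    (d : (Fin n ⊕ Fin n) →₀ ℕ) :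
    d ∈ (rho n (monXY n p q)).support ↔
      ∃ π : Equiv.Perm (Fin n), expF (p ∘ π) (q ∘ π) = d := by
  rw [MvPolynomial.mem_support_iff, coeff_rho p q h d]
  constructor
  · intro hne
    by_contra hc
    push_neg at hc
    apply hne
    rw [Finset.sum_eq_zero, mul_zero]
    intro σ _
    rw [if_neg (hc _)]
  · rintro ⟨π, hπ⟩
    have hpos : (0 : ℚ) <
        ∑ σ : ↥(HOct n),
          (if expF (p ∘ (eIdx σ.1 σ.2).symm) (q ∘ (eIdx σ.1 σ.2).symm) = d
            then (1 : ℚ) else 0) := by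
      apply Finset.sum_pos'
      · intro σ _; positivity
      · refine ⟨⟨permZ n π⁻¹, permZ_mem π⁻¹⟩, Finset.mem_univ _, ?_⟩
        have he : (eIdx (permZ n π⁻¹) (permZ_mem π⁻¹)).symm = π := by
          rw [eIdx_permZ]; rfl
        rw [if_pos]
        · norm_num
        · rw [he]; exact hπ
    have hcard : (0 : ℚ) < (Nat.card ↥(HOct n) : ℚ)⁻¹ := by
      have := hoct_card_pos n
      positivity
    exact ne_of_gt (mul_pos hcard hpos)

/-- The sorting key for ordered monomials. -/
def keyF (p q : Fin n → ℕ) (i : Fin n) : Lex (ℤ × ℤ) :=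
  toLex (-(p i : ℤ), if Even (p i) then -(q i : ℤ) else (q i : ℤ))

theorem key_eq {p q p' q' : Fin n → ℕ} {i j : Fin n}
    (h : keyF p q i = keyF p' q' j) : p i = p' j ∧ q i = q' j := by
  unfold keyF at h
  have h' := congrArg ofLex h
  simp only [ofLex_toLex] at h'
  obtain ⟨h1, h2⟩ := Prod.ext_iff.mp h'
  simp only at h1 h2
  have hp : p i = p' j := by omega
  rw [hp] at h2
  split_ifs at h2 <;> exact ⟨hp, by omega⟩

theorem monotone_of_adj {α : Type*} [Preorder α] {f : Fin n → α}
    (h : ∀ (i : ℕ) (hi : i + 1 < n), f ⟨i, by omega⟩ ≤ f ⟨i + 1, hi⟩) :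
    Monotone f := by
  have key : ∀ k : ℕ, ∀ i : Fin n, ∀ hk : (i : ℕ) + k < n, f i ≤ f ⟨(i : ℕ) + k, hk⟩ := by
    intro k
    induction k with
    | zero =>
      intro i hk
      have he : (⟨(i : ℕ) + 0, hk⟩ : Fin n) = i := Fin.ext (by simp)
      rw [he]
    | succ k ih =>
      intro i hk
      have h1 : (i : ℕ) + k < n := by omega
      have h2 := h ((i : ℕ) + k) hk
      exact (ih i h1).trans h2
  intro i j hij
  have hij' : (i : ℕ) ≤ (j : ℕ) := hij
  have hk : (i : ℕ) + ((j : ℕ) - (i : ℕ)) < n := by have := j.2; omega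
  have hthis := key ((j : ℕ) - (i : ℕ)) i hk
  have he : (⟨(i : ℕ) + ((j : ℕ) - (i : ℕ)), hk⟩ : Fin n) = j := Fin.ext (by simp; omega)
  rwa [he] at hthis

theorem orderedMon_of_monotone {p q : Fin n → ℕ} (he : ∀ k, Even (p k + q k))
    (hm : Monotone (keyF p q)) : OrderedMon n p q := by
  refine ⟨he, ?_, ?_, ?_⟩
  · intro i j hij
    have h1 := hm hij
    unfold keyF at h1
    rw [Prod.Lex.le_iff] at h1
    rcases h1 with h1 | ⟨h1, _⟩ <;> simp only [ofLex_toLex] at h1 <;> omega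
  · intro i hlt hpe hev
    have hle : i ≤ (⟨(i : ℕ) + 1, hlt⟩ : Fin n) := by
      rw [Fin.le_def]; simp
    have h1 := hm hle
    unfold keyF at h1
    rw [Prod.Lex.le_iff] at h1
    rcases h1 with h1 | ⟨_, h2⟩
    · simp only [ofLex_toLex] at h1; omega
    · simp only [ofLex_toLex] at h2
      rw [← hpe] at h2
      rw [if_pos hev, if_pos hev] at h2
      omega
  · intro i hlt hpe hodd
    have hle : i ≤ (⟨(i : ℕ) + 1, hlt⟩ : Fin n) := by
      rw [Fin.le_def]; simp
    have h1 := hm hle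
    unfold keyF at h1
    rw [Prod.Lex.le_iff] at h1
    rcases h1 with h1 | ⟨_, h2⟩
    · simp only [ofLex_toLex] at h1; omega
    · simp only [ofLex_toLex] at h2
      rw [← hpe] at h2
      rw [if_neg (Nat.not_even_iff_odd.mpr hodd), if_neg (Nat.not_even_iff_odd.mpr hodd)] at h2
      omega

theorem monotone_of_ordered {p q : Fin n → ℕ} (ho : OrderedMon n p q) :
    Monotone (keyF p q) := by
  obtain ⟨he, hant, heve, hodd⟩ := ho
  apply monotone_of_adj
  intro i hi
  unfold keyF
  rw [Prod.Lex.le_iff]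
  have hab : (⟨i, by omega⟩ : Fin n) ≤ ⟨i + 1, hi⟩ := by
    rw [Fin.le_def]; simp
  have hp : p ⟨i + 1, hi⟩ ≤ p ⟨i, by omega⟩ := hant hab
  rcases eq_or_lt_of_le hp with heq | hlt
  · right
    constructor
    · simp only [ofLex_toLex]; rw [heq]
    · simp only [ofLex_toLex]
      by_cases hev : Even (p (⟨i, by omega⟩ : Fin n))
      · rw [if_pos hev, if_pos (by rwa [heq])]
        have hq : q ⟨i + 1, hi⟩ ≤ q ⟨i, by omega⟩ := heve ⟨i, by omega⟩ hi heq.symm hev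
        omega
      · rw [if_neg hev, if_neg (by rwa [heq])]
        have hq : q ⟨i, by omega⟩ ≤ q ⟨i + 1, hi⟩ :=
          hodd ⟨i, by omega⟩ hi heq.symm (Nat.not_even_iff_odd.mp hev)
        omega
  · left
    simp only [ofLex_toLex]
    omega

end Aux


/-- For a monomial `x^p y^q` with all `p_k + q_k` even, among the monomials appearing
with nonzero coefficient in `ρ(x^p y^q)` there is exactly one ordered monomial
`n(x,y) ∈ 𝒪ₙ`, and moreover `ρ(x^p y^q) = ρ(n(x,y))`. -/
theorem unique_ordered_monomial_in_rho (n : ℕ) (hn : 1 ≤ n) (p q : Fin n → ℕ)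
    (h : ∀ k, Even (p k + q k)) :
    ∃ d : (Fin n ⊕ Fin n) →₀ ℕ,
      (d ∈ (rho n (monXY n p q)).support ∧
        OrderedMon n (fun i => d (Sum.inl i)) (fun i => d (Sum.inr i))) ∧
      (∀ d' : (Fin n ⊕ Fin n) →₀ ℕ,
        d' ∈ (rho n (monXY n p q)).support →
        OrderedMon n (fun i => d' (Sum.inl i)) (fun i => d' (Sum.inr i)) →
        d' = d) ∧
      rho n (monXY n p q) =
        rho n (monXY n (fun i => d (Sum.inl i)) (fun i => d (Sum.inr i))) := by
  classical
  set τ := Tuple.sort (keyF p q) with hτdef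
  set P : Fin n → ℕ := p ∘ ⇑τ with hP
  set Q : Fin n → ℕ := q ∘ ⇑τ with hQ
  have hkey : keyF P Q = keyF p q ∘ ⇑τ := rfl
  have hPQe : ∀ k, Even (P k + Q k) := fun k => h (τ k)
  have hmono : Monotone (keyF P Q) := by
    rw [hkey]; exact Tuple.monotone_sort _
  have hordPQ : OrderedMon n P Q := orderedMon_of_monotone hPQe hmono
  have e1 : (fun i => (expF P Q) (Sum.inl i)) = P := funext fun i => expF_inl i
  have e2 : (fun i => (expF P Q) (Sum.inr i)) = Q := funext fun i => expF_inr i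
  refine ⟨expF P Q, ⟨?_, ?_⟩, ?_, ?_⟩
  · rw [mem_support_rho_iff p q h]
    exact ⟨τ, by rw [hP, hQ]⟩
  · rw [e1, e2]; exact hordPQ
  · intro d' hd' hord'
    rw [mem_support_rho_iff p q h] at hd'
    obtain ⟨π, hπ⟩ := hd'
    subst hπ
    have e1' : (fun i => (expF (p ∘ ⇑π) (q ∘ ⇑π)) (Sum.inl i)) = p ∘ ⇑π :=
      funext fun i => expF_inl i
    have e2' : (fun i => (expF (p ∘ ⇑π) (q ∘ ⇑π)) (Sum.inr i)) = q ∘ ⇑π :=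
      funext fun i => expF_inr i
    rw [e1', e2'] at hord'
    have hmono' : Monotone (keyF p q ∘ ⇑π) := monotone_of_ordered hord'
    have hsorted : keyF p q ∘ ⇑π = keyF p q ∘ ⇑(Tuple.sort (keyF p q)) :=
      Tuple.comp_sort_eq_comp_iff_monotone.mpr hmono'
    refine expF_eq_iff.mpr ⟨funext fun i => ?_, funext fun i => ?_⟩
    · exact (key_eq (congrFun hsorted i)).1
    · exact (key_eq (congrFun hsorted i)).2
  · rw [e1, e2]
    have hσ := permZ_mem (n := n) τ⁻¹
    have hM : monXY n P Q = actXY n (permZ n τ⁻¹) (monXY n p q) := by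
      rw [actXY_monXY hσ p q h]
      have hsymm : (eIdx (permZ n τ⁻¹) hσ).symm = τ := by
        rw [eIdx_permZ]; rfl
      rw [hsymm, hP, hQ]
    rw [hM, rho_actXY hσ]
end
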